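/- The prism Σ₂, defined as the convex hull in ℂ×ℝ ≅ ℝ³ of the six points (1−(√2/2)i, √2), (1+(√2/2)i, √2), (−1+(√2/2)i, √2), (1−(√2/2)i, −√2), (1+(√2/2)i, −√2), (−1+(√2/2)i, −√2), is contained in the union of the six open Cygan balls B((0,0), 2), B((1,0), 1), B((1, 2√2), 1), B((1, −2√2), 1), B((−1, 0), 1) and B((−1, −2√2), 1). -/

import Mathlib

noncomputable section

open Complex

/-- The open Cygan ball of squared radius `s` centred at `(ζ₀, t₀)` in the Heisenberg
group `ℂ × ℝ`:  `{(ζ,t) : | |ζ−ζ₀|² + i(t−t₀) + 2i·Im(ζ·conj ζ₀) | < s}`. -/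
def cyganBall (ζ₀ : ℂ) (t₀ : ℝ) (s : ℝ) : Set (ℂ × ℝ) :=
  {p | ‖(((‖p.1 - ζ₀‖ ^ 2 : ℝ) : ℂ)
        + Complex.I * ((p.2 - t₀ : ℝ) : ℂ)
        + 2 * Complex.I * (((p.1 * (starRingEnd ℂ) ζ₀).im : ℝ) : ℂ))‖ < s}

/-- The fundamental prism `Σ₂` for the stabiliser of `q∞` in `PU(2,1;ℤ[i√2])` acting on
the Heisenberg group: the convex hull of its six vertices. -/
def Sigma2 : Set (ℂ × ℝ) :=
  convexHull ℝ
    ({(1 - (√2/2 : ℝ) * Complex.I, (√2 : ℝ)),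
      (1 + (√2/2 : ℝ) * Complex.I, (√2 : ℝ)),
      (-1 + (√2/2 : ℝ) * Complex.I, (√2 : ℝ)),
      (1 - (√2/2 : ℝ) * Complex.I, -(√2 : ℝ)),
      (1 + (√2/2 : ℝ) * Complex.I, -(√2 : ℝ)),
      (-1 + (√2/2 : ℝ) * Complex.I, -(√2 : ℝ))} : Set (ℂ × ℝ))

private lemma hsq1 {a : ℝ} (h1 : -1 ≤ a) (h2 : a ≤ 1) : a^2 ≤ 1 := by nlinarith
private lemma hsq_le {a b : ℝ} (h0 : 0 ≤ a) (hb : a ≤ b) : a^2 ≤ b^2 := by nlinarith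
private lemma hge_of_sq {a c : ℝ} (h0 : 0 ≤ a) (h : c^2 ≤ a^2) (hc : 0 ≤ c) : c ≤ a := by nlinarith
private lemma hle_of_sq {a c : ℝ} (h0 : a ≤ 0) (h : c^2 ≤ a^2) (hc : 0 ≤ c) : a ≤ -c := by nlinarith
private lemma hsq_small {a c : ℝ} (h1 : -c ≤ a) (h2 : a ≤ c) : a^2 ≤ c^2 := by nlinarith
private lemma hA_helper {a : ℝ} (h1 : a ≤ 3/2) (h0 : 0 ≤ a) (h2 : 2 ≤ a^2) : 4/3 ≤ a := by nlinarith

set_option maxHeartbeats 4000000 in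
private lemma key (x v u : ℝ) (hx1 : x ≤ 1) (hxv : -x ≤ v) (hv : v ≤ 1)
    (hu1 : -1 ≤ u) (hu2 : u ≤ 1) :
    (x^2+v^2/2)^2+2*u^2 < 4 ∨ ((x-1)^2+v^2/2)^2+2*(u+v)^2 < 1 ∨
    ((x-1)^2+v^2/2)^2+2*(u+v-2)^2 < 1 ∨ ((x-1)^2+v^2/2)^2+2*(u+v+2)^2 < 1 ∨
    ((x+1)^2+v^2/2)^2+2*(u-v)^2 < 1 ∨ ((x+1)^2+v^2/2)^2+2*(u-v+2)^2 < 1 := by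
  by_contra h
  push_neg at h
  obtain ⟨h0, h2, h3, h4, h5, h6⟩ := h
  have hxm1 : -1 ≤ x := by linarith
  have hvm1 : -1 ≤ v := by linarith
  have hx2 : x^2 ≤ 1 := hsq1 hxm1 hx1
  have hv2 : v^2 ≤ 1 := hsq1 hvm1 hv
  have hu2' : u^2 ≤ 1 := hsq1 hu1 hu2
  have hA32 : x^2 + v^2/2 ≤ 3/2 := by linarith
  have hA0 : 0 ≤ x^2 + v^2/2 := by positivity
  have hA94 : (x^2+v^2/2)^2 ≤ 9/4 := by
    have := hsq_le hA0 hA32; linarith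
  have hAsq : 2 ≤ (x^2+v^2/2)^2 := by linarith
  have hA : 4/3 ≤ x^2 + v^2/2 := hA_helper hA32 hA0 hAsq
  have hx56 : 5/6 ≤ x^2 := by linarith
  have hv23 : 2/3 ≤ v^2 := by linarith
  have hu78 : 7/8 ≤ u^2 := by linarith
  rcases le_or_gt x 0 with hx0 | hx0
  · have hx910 : x ≤ -(9/10) := by
      have := hle_of_sq hx0 (by linarith : (9/10:ℝ)^2 ≤ x^2) (by norm_num); linarith
    have hv910 : 9/10 ≤ v := by linarith
    have hB : (x+1)^2 + v^2/2 ≤ 51/100 := by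
      have h1 : (x+1)^2 ≤ (1/10)^2 := hsq_le (by linarith) (by linarith)
      norm_num at h1; linarith
    have hB0 : (0:ℝ) ≤ (x+1)^2 + v^2/2 := by positivity
    have hB2 : ((x+1)^2+v^2/2)^2 ≤ 2601/10000 := by
      have := hsq_le hB0 hB; norm_num at this; linarith
    rcases le_or_gt (u - v) (-1) with hw | hw
    · have h6' : (3/5:ℝ)^2 ≤ (u-v+2)^2 := by norm_num; linarith
      have huv2 : 0 ≤ u - v + 2 := by linarith
      have := hge_of_sq huv2 h6' (by norm_num)
      have hu0 : u ≤ 0 := by linarith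
      have hu910 : u ≤ -(9/10) := by
        have := hle_of_sq hu0 (by linarith : (9/10:ℝ)^2 ≤ u^2) (by norm_num); linarith
      linarith
    · have h5' : (3/5:ℝ)^2 ≤ (u-v)^2 := by norm_num; linarith
      have huv : u - v ≤ -(3/5) := by
        rcases le_or_gt 0 (u - v) with hp | hp
        · exfalso
          have := hge_of_sq hp h5' (by norm_num)
          linarith
        · have := hle_of_sq (le_of_lt hp) h5' (by norm_num); linarith
      have hu910 : u ≤ -(9/10) := by
        by_contra hcon
        push_neg at hcon
        have : u^2 ≤ (9/10:ℝ)^2 := hsq_small (by linarith) (by linarith)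
        norm_num at this; linarith
      linarith
  · have hx910 : 9/10 ≤ x := by
      have := hge_of_sq (le_of_lt hx0) (by linarith : (9/10:ℝ)^2 ≤ x^2) (by norm_num); linarith
    have hB : (x-1)^2 + v^2/2 ≤ 51/100 := by
      have h1 : (x-1)^2 ≤ (1/10)^2 := by
        have : (1-x)^2 ≤ (1/10)^2 := hsq_le (by linarith) (by linarith)
        calc (x-1)^2 = (1-x)^2 := by ring
        _ ≤ (1/10)^2 := this
      norm_num at h1; linarith
    have hB0 : (0:ℝ) ≤ (x-1)^2 + v^2/2 := by positivity
    have hB2 : ((x-1)^2+v^2/2)^2 ≤ 2601/10000 := by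
      have := hsq_le hB0 hB; norm_num at this; linarith
    rcases le_or_gt 1 (u+v) with hw | hw
    · have h3' : (3/5:ℝ)^2 ≤ (u+v-2)^2 := by norm_num; linarith
      have hle : u + v - 2 ≤ 0 := by linarith
      have := hle_of_sq hle h3' (by norm_num)
      have hv0 : 0 ≤ v := by linarith
      have hv45 : 4/5 ≤ v := hge_of_sq hv0 (by linarith : (4/5:ℝ)^2 ≤ v^2) (by norm_num)
      have hu0 : 0 ≤ u := by linarith
      have hu910 : 9/10 ≤ u := hge_of_sq hu0 (by linarith : (9/10:ℝ)^2 ≤ u^2) (by norm_num)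
      linarith
    · rcases le_or_gt (u+v) (-1) with hw2 | hw2
      · have h4' : (3/5:ℝ)^2 ≤ (u+v+2)^2 := by norm_num; linarith
        have hge : 0 ≤ u + v + 2 := by linarith
        have := hge_of_sq hge h4' (by norm_num)
        have hv0 : v ≤ 0 := by linarith
        have hv45 : v ≤ -(4/5) := by
          have := hle_of_sq hv0 (by linarith : (4/5:ℝ)^2 ≤ v^2) (by norm_num); linarith
        have hu0 : u ≤ 0 := by linarith
        have hu910 : u ≤ -(9/10) := by
          have := hle_of_sq hu0 (by linarith : (9/10:ℝ)^2 ≤ u^2) (by norm_num); linarith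
        linarith
      · have h2' : (3/5:ℝ)^2 ≤ (u+v)^2 := by norm_num; linarith
        rcases le_or_gt v 0 with hvs | hvs
        · have hv45 : v ≤ -(4/5) := by
            have := hle_of_sq hvs (by linarith : (4/5:ℝ)^2 ≤ v^2) (by norm_num); linarith
          rcases le_or_gt u 0 with hus | hus
          · have : u ≤ -(9/10) := by
              have := hle_of_sq hus (by linarith : (9/10:ℝ)^2 ≤ u^2) (by norm_num); linarith
            linarith
          · have hu910 : 9/10 ≤ u := hge_of_sq (le_of_lt hus) (by linarith : (9/10:ℝ)^2 ≤ u^2) (by norm_num)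
            have : (u+v)^2 ≤ (1/5:ℝ)^2 := hsq_small (by linarith) (by linarith)
            norm_num at this; linarith
        · have hv45 : 4/5 ≤ v := hge_of_sq (le_of_lt hvs) (by linarith : (4/5:ℝ)^2 ≤ v^2) (by norm_num)
          rcases le_or_gt u 0 with hus | hus
          · have hu910 : u ≤ -(9/10) := by
              have := hle_of_sq hus (by linarith : (9/10:ℝ)^2 ≤ u^2) (by norm_num); linarith
            have : (u+v)^2 ≤ (1/5:ℝ)^2 := hsq_small (by linarith) (by linarith)
            norm_num at this; linarith
          · have : 9/10 ≤ u := hge_of_sq (le_of_lt hus) (by linarith : (9/10:ℝ)^2 ≤ u^2) (by norm_num)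
            linarith

private lemma key' (x y t : ℝ) (hx : x ≤ 1) (hy : y ≤ √2/2)
    (hxy : 0 ≤ √2*x + 2*y) (ht1 : -√2 ≤ t) (ht2 : t ≤ √2) :
    (x^2+y^2)^2+t^2 < 4 ∨ ((x-1)^2+y^2)^2+(t+2*y)^2 < 1 ∨
    ((x-1)^2+y^2)^2+(t+2*y-2*√2)^2 < 1 ∨ ((x-1)^2+y^2)^2+(t+2*y+2*√2)^2 < 1 ∨
    ((x+1)^2+y^2)^2+(t-2*y)^2 < 1 ∨ ((x+1)^2+y^2)^2+(t-2*y+2*√2)^2 < 1 := by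
  set s := √2 with hsdef
  have hs : s^2 = 2 := Real.sq_sqrt (by norm_num)
  have hs0 : (0:ℝ) < s := Real.sqrt_pos.mpr (by norm_num)
  have hxv : -x ≤ s*y := by
    have h1 : 0 ≤ s*(s*x+2*y) := mul_nonneg hs0.le hxy
    have e : s*(s*x+2*y) = 2*x + 2*(s*y) := by linear_combination x*hs
    rw [e] at h1; linarith
  have hv : s*y ≤ 1 := by
    have h1 : s*y ≤ s*(s/2) := mul_le_mul_of_nonneg_left hy hs0.le
    have e : s*(s/2) = 1 := by linear_combination hs/2
    linarith
  have hu1 : -1 ≤ s*t/2 := by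
    have h1 : s*(-s) ≤ s*t := mul_le_mul_of_nonneg_left ht1 hs0.le
    have e : s*(-s) = -2 := by linear_combination -hs
    linarith
  have hu2 : s*t/2 ≤ 1 := by
    have h1 : s*t ≤ s*s := mul_le_mul_of_nonneg_left ht2 hs0.le
    have e : s*s = 2 := by linear_combination hs
    linarith
  have ey : (x:ℝ)^2 + (s*y)^2/2 = x^2 + y^2 := by linear_combination (y^2/2)*hs
  have eym : (x-1)^2 + (s*y)^2/2 = (x-1)^2 + y^2 := by linear_combination (y^2/2)*hs
  have eyp : (x+1)^2 + (s*y)^2/2 = (x+1)^2 + y^2 := by linear_combination (y^2/2)*hs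
  rcases key x (s*y) (s*t/2) hx hxv hv hu1 hu2 with h|h|h|h|h|h
  · left
    rw [ey] at h
    have e2 : 2*(s*t/2)^2 = t^2 := by linear_combination (t^2/2)*hs
    linarith
  · right; left
    rw [eym] at h
    have e2 : 2*(s*t/2 + s*y)^2 = (t+2*y)^2 := by linear_combination (2*(t/2+y)^2)*hs
    linarith
  · right; right; left
    rw [eym] at h
    have e2 : 2*(s*t/2 + s*y - 2)^2 = (t+2*y-2*s)^2 := by
      linear_combination (2*(t/2+y)^2 - 4)*hs
    linarith
  · right; right; right; left
    rw [eym] at h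
    have e2 : 2*(s*t/2 + s*y + 2)^2 = (t+2*y+2*s)^2 := by
      linear_combination (2*(t/2+y)^2 - 4)*hs
    linarith
  · right; right; right; right; left
    rw [eyp] at h
    have e2 : 2*(s*t/2 - s*y)^2 = (t-2*y)^2 := by linear_combination (2*(t/2-y)^2)*hs
    linarith
  · right; right; right; right; right
    rw [eyp] at h
    have e2 : 2*(s*t/2 - s*y + 2)^2 = (t-2*y+2*s)^2 := by
      linear_combination (2*(t/2-y)^2 - 4)*hs
    linarith

private lemma mem_cyganBall (p : ℂ × ℝ) (ζ₀ : ℂ) (t₀ s : ℝ) (hs : 0 < s)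
    (h : ((p.1.re - ζ₀.re)^2 + (p.1.im - ζ₀.im)^2)^2
        + (p.2 - t₀ + 2*(p.1.im*ζ₀.re - p.1.re*ζ₀.im))^2 < s^2) :
    p ∈ cyganBall ζ₀ t₀ s := by
  unfold cyganBall
  simp only [Set.mem_setOf_eq]
  rw [Complex.norm_def, Real.sqrt_lt' hs, Complex.normSq_apply]
  have hre : (((‖p.1 - ζ₀‖ ^ 2 : ℝ) : ℂ)
        + Complex.I * ((p.2 - t₀ : ℝ) : ℂ)
        + 2 * Complex.I * (((p.1 * (starRingEnd ℂ) ζ₀).im : ℝ) : ℂ)).re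
      = ‖p.1 - ζ₀‖ ^ 2 := by simp [← Complex.ofReal_pow]
  have him : (((‖p.1 - ζ₀‖ ^ 2 : ℝ) : ℂ)
        + Complex.I * ((p.2 - t₀ : ℝ) : ℂ)
        + 2 * Complex.I * (((p.1 * (starRingEnd ℂ) ζ₀).im : ℝ) : ℂ)).im
      = (p.2 - t₀) + 2 * (p.1 * (starRingEnd ℂ) ζ₀).im := by simp [← Complex.ofReal_pow]
  rw [hre, him]
  have habs : ‖p.1 - ζ₀‖ ^ 2 = (p.1.re - ζ₀.re)^2 + (p.1.im - ζ₀.im)^2 := by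
    rw [Complex.sq_norm, Complex.normSq_apply]; simp [Complex.sub_re, Complex.sub_im]; ring
  have him2 : (p.1 * (starRingEnd ℂ) ζ₀).im = p.1.im*ζ₀.re - p.1.re*ζ₀.im := by
    simp [Complex.mul_im]; ring
  rw [habs, him2]
  nlinarith [h]

private lemma sigma2_sub :
    Sigma2 ⊆ {p : ℂ × ℝ | p.1.re ≤ 1 ∧ p.1.im ≤ √2/2 ∧ 0 ≤ √2*p.1.re + 2*p.1.im ∧
      -√2 ≤ p.2 ∧ p.2 ≤ √2} := by
  have h2 : (0:ℝ) ≤ √2 := Real.sqrt_nonneg 2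
  apply convexHull_min
  · intro q hq
    simp only [Set.mem_insert_iff, Set.mem_singleton_iff] at hq
    rcases hq with rfl|rfl|rfl|rfl|rfl|rfl <;>
      refine ⟨?_, ?_, ?_, ?_, ?_⟩ <;> simp <;> linarith
  · intro p hp q hq a b ha hb hab
    simp only [Set.mem_setOf_eq] at hp hq ⊢
    obtain ⟨hp1,hp2,hp3,hp4,hp5⟩ := hp
    obtain ⟨hq1,hq2,hq3,hq4,hq5⟩ := hq
    have e1 : (a • p + b • q).1.re = a * p.1.re + b * q.1.re := by
      simp [Complex.smul_re]
    have e2 : (a • p + b • q).1.im = a * p.1.im + b * q.1.im := by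
      simp [Complex.smul_im]
    have e3 : (a • p + b • q).2 = a * p.2 + b * q.2 := by
      simp [smul_eq_mul]
    rw [e1, e2, e3]
    refine ⟨by nlinarith, by nlinarith, by nlinarith, by nlinarith, by nlinarith⟩

/-- **Proposition 5.1 of the paper**: the prism `Σ₂` is contained in the union of the
interiors of the six spinal spheres `S₀`, `S₁`, `T(S₁)`, `T⁻¹(S₁)`, `R₁(S₁)` and
`T⁻¹R₁(S₁)`, i.e. in the union of the corresponding six open Cygan balls. -/
theorem Sigma2_subset_union_cyganBalls :
    Sigma2 ⊆
      cyganBall 0 0 2 ∪ cyganBall 1 0 1 ∪ cyganBall 1 (2*√2) 1 ∪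
        cyganBall 1 (-(2*√2)) 1 ∪ cyganBall (-1) 0 1 ∪ cyganBall (-1) (-(2*√2)) 1 := by
  intro p hp
  obtain ⟨hx, hy, hxy, ht1, ht2⟩ := sigma2_sub hp
  rcases key' p.1.re p.1.im p.2 hx hy hxy ht1 ht2 with h|h|h|h|h|h
  · refine Or.inl (Or.inl (Or.inl (Or.inl (Or.inl (mem_cyganBall p 0 0 2 (by norm_num) ?_)))))
    simp only [Complex.zero_re, Complex.zero_im]
    nlinarith [h]
  · refine Or.inl (Or.inl (Or.inl (Or.inl (Or.inr (mem_cyganBall p 1 0 1 (by norm_num) ?_)))))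
    simp only [Complex.one_re, Complex.one_im]
    nlinarith [h]
  · refine Or.inl (Or.inl (Or.inl (Or.inr (mem_cyganBall p 1 (2*√2) 1 (by norm_num) ?_))))
    simp only [Complex.one_re, Complex.one_im]
    nlinarith [h]
  · refine Or.inl (Or.inl (Or.inr (mem_cyganBall p 1 (-(2*√2)) 1 (by norm_num) ?_)))
    simp only [Complex.one_re, Complex.one_im]
    nlinarith [h]
  · refine Or.inl (Or.inr (mem_cyganBall p (-1) 0 1 (by norm_num) ?_))
    simp only [Complex.neg_re, Complex.neg_im, Complex.one_re, Complex.one_im]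
    nlinarith [h]
  · refine Or.inr (mem_cyganBall p (-1) (-(2*√2)) 1 (by norm_num) ?_)
    simp only [Complex.neg_re, Complex.neg_im, Complex.one_re, Complex.one_im]
    nlinarith [h]

end
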